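/- Monotone comparison of triangles in Euclidean space: suppose x, y, z, x', y', z' are points in a real inner product space with ‖x - y‖ ≤ ‖x' - y'‖, ‖y - z‖ ≤ ‖y' - z'‖, and ‖x' - z'‖ ≤ ‖x - z‖. Fix t ∈ [0,1] and set p = (1-t)x + tz and p' = (1-t)x' + tz'. Then ‖y - p‖ ≤ ‖y' - p'‖. -/
import Mathlib

lemma key_id {E : Type*} [NormedAddCommGroup E] [InnerProductSpace ℝ E]
    (x y z : E) (t : ℝ) :
    ‖y - ((1 - t) • x + t • z)‖ ^ 2
      = (1 - t) * ‖y - x‖ ^ 2 + t * ‖y - z‖ ^ 2 - t * (1 - t) * ‖x - z‖ ^ 2 := by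
  have h : y - ((1 - t) • x + t • z) = (1 - t) • (y - x) + t • (y - z) := by module
  have hxz : x - z = (y - z) - (y - x) := by abel
  rw [h, hxz, ← real_inner_self_eq_norm_sq, ← real_inner_self_eq_norm_sq,
    ← real_inner_self_eq_norm_sq, ← real_inner_self_eq_norm_sq]
  simp only [inner_add_add_self, inner_sub_sub_self, real_inner_smul_left,
    real_inner_smul_right, real_inner_comm (y - x) (y - z)]
  ring

theorem stmt_3 {E : Type*} [NormedAddCommGroup E] [InnerProductSpace ℝ E]
    (x y z x' y' z' : E)
    (h1 : ‖x - y‖ ≤ ‖x' - y'‖) (h2 : ‖y - z‖ ≤ ‖y' - z'‖) (h3 : ‖x' - z'‖ ≤ ‖x - z‖)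
    (t : ℝ) (ht0 : 0 ≤ t) (ht1 : t ≤ 1)
    (p p' : E) (hp : p = (1 - t) • x + t • z) (hp' : p' = (1 - t) • x' + t • z') :
    ‖y - p‖ ≤ ‖y' - p'‖ := by
  have h1' : ‖y - x‖ ≤ ‖y' - x'‖ := by rwa [norm_sub_rev, norm_sub_rev y' x']
  have e1 := key_id x y z t
  have e2 := key_id x' y' z' t
  have A : ‖y - x‖ ^ 2 ≤ ‖y' - x'‖ ^ 2 := pow_le_pow_left₀ (norm_nonneg _) h1' 2
  have B : ‖y - z‖ ^ 2 ≤ ‖y' - z'‖ ^ 2 := pow_le_pow_left₀ (norm_nonneg _) h2 2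
  have C : ‖x' - z'‖ ^ 2 ≤ ‖x - z‖ ^ 2 := pow_le_pow_left₀ (norm_nonneg _) h3 2
  have ht1' : (0:ℝ) ≤ 1 - t := by linarith
  have hsq : ‖y - p‖ ^ 2 ≤ ‖y' - p'‖ ^ 2 := by
    rw [hp, hp', e1, e2]
    nlinarith [mul_le_mul_of_nonneg_left A ht1', mul_le_mul_of_nonneg_left B ht0,
      mul_le_mul_of_nonneg_left C (mul_nonneg ht0 ht1')]
  exact (pow_le_pow_iff_left₀ (norm_nonneg _) (norm_nonneg _) two_ne_zero).mp hsq
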